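/- Simulation of SP by aSP: if N is an SP network and N → N' in SP, then N_[] →* N'_[] in aSP, where N_[] denotes the asynchronous network obtained from N by equipping each process with an empty message queue. -/
import Mathlib


set_option autoImplicit true
set_option linter.unusedVariables false

/-- Behaviours of Stateful Processes (SP). -/
inductive Behaviour (P E : Type) : Type where
  | send : P → E → Behaviour P E → Behaviour P E   -- q!e ; B
  | recv : P → Behaviour P E → Behaviour P E       -- p? ; B
  | cond : E → Behaviour P E → Behaviour P E → Behaviour P E  -- if e then B₁ else B₂
  | recdef : Nat → Behaviour P E → Behaviour P E → Behaviour P E  -- def X = B₂ in B₁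
  | call : Nat → Behaviour P E
  | nil : Behaviour P E
  deriving DecidableEq

/-- Substitution of a behaviour for a recursion variable: B[D/X]. -/
def bsubst {P E : Type} : Behaviour P E → Nat → Behaviour P E → Behaviour P E
  | .send q e B, X, D => .send q e (bsubst B X D)
  | .recv p B, X, D => .recv p (bsubst B X D)
  | .cond e B₁ B₂, X, D => .cond e (bsubst B₁ X D) (bsubst B₂ X D)
  | .recdef Y B₂ B₁, X, D =>
      if Y = X then .recdef Y B₂ B₁ else .recdef Y (bsubst B₂ X D) (bsubst B₁ X D)
  | .call Y, X, D => if Y = X then D else .call Y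
  | .nil, _, _ => .nil

/-- Structural precongruence on behaviours (recursion unfolding and garbage collection). -/
inductive BPre {P E : Type} : Behaviour P E → Behaviour P E → Prop where
  | refl : BPre B B
  | trans : BPre B₁ B₂ → BPre B₂ B₃ → BPre B₁ B₃
  | sendCong : BPre B B' → BPre (.send q e B) (.send q e B')
  | recvCong : BPre B B' → BPre (.recv p B) (.recv p B')
  | condCong : BPre B₁ B₁' → BPre B₂ B₂' → BPre (.cond e B₁ B₂) (.cond e B₁' B₂')
  | recCong : BPre B₂ B₂' → BPre B₁ B₁' → BPre (.recdef X B₂ B₁) (.recdef X B₂' B₁')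
  | unfold : BPre (.recdef X B₂ B₁) (.recdef X B₂ (bsubst B₁ X B₂))
  | procEnd : BPre (.recdef X B .nil) .nil
/-- Networks of Stateful Processes (SP). -/
inductive Net (P E Mem : Type) : Type where
  | actor : P → Mem → Behaviour P E → Net P E Mem  -- p ▷_σ B
  | par : Net P E Mem → Net P E Mem → Net P E Mem
  | nil : Net P E Mem

/-- Structural precongruence ⪯ on SP networks. -/
inductive NPre {P E Mem : Type} : Net P E Mem → Net P E Mem → Prop where
  | refl : NPre N N
  | trans : NPre N₁ N₂ → NPre N₂ N₃ → NPre N₁ N₃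
  | actorCong : BPre B B' → NPre (.actor p σ B) (.actor p σ B')
  | parCong : NPre N₁ N₁' → NPre N₂ N₂' → NPre (.par N₁ N₂) (.par N₁' N₂')
  | parComm : NPre (.par N₁ N₂) (.par N₂ N₁)
  | parAssoc : NPre (.par (.par N₁ N₂) N₃) (.par N₁ (.par N₂ N₃))
  | parAssoc' : NPre (.par N₁ (.par N₂ N₃)) (.par (.par N₁ N₂) N₃)
  | pZero : NPre (.actor p σ .nil) .nil
  | nZero : NPre (.par N .nil) N
  | nZero' : NPre N (.par N .nil)

/-- Synchronous semantics of SP networks. -/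
inductive StepN {P E Mem Val : Type}
    (ev : E → Mem → Val) (tr : Val → Bool) (up : Mem → Val → Mem) :
    Net P E Mem → Net P E Mem → Prop where
  | com : StepN ev tr up
      (.par (.actor p σp (.send q e B₁)) (.actor q σq (.recv p B₂)))
      (.par (.actor p σp B₁) (.actor q (up σq (ev e σp)) B₂))
  | thenB : tr (ev e σp) = true →
      StepN ev tr up (.actor p σp (.cond e B₁ B₂)) (.actor p σp B₁)
  | elseB : tr (ev e σp) = false →
      StepN ev tr up (.actor p σp (.cond e B₁ B₂)) (.actor p σp B₂)
  | ctx : StepN ev tr up (.par (.actor p σp B) N) (.par (.actor p σp' B') N') →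
      StepN ev tr up (.par (.actor p σp (.recdef X B₂ B)) N)
                     (.par (.actor p σp' (.recdef X B₂ B')) N')
  | par : StepN ev tr up N N' → StepN ev tr up (.par N M) (.par N' M)
  | struct : NPre N₁ N₂ → StepN ev tr up N₂ N₂' → NPre N₂' N₁' → StepN ev tr up N₁ N₁'
/-- Asynchronous Stateful Processes (aSP): networks of processes p ▷^ρ_σ B, each
    carrying a FIFO queue ρ of incoming messages ⟨sender, value⟩. -/
inductive ANet (P E Mem Val : Type) : Type where
  | actor : P → List (P × Val) → Mem → Behaviour P E → ANet P E Mem Val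
  | par : ANet P E Mem Val → ANet P E Mem Val → ANet P E Mem Val
  | nil : ANet P E Mem Val

/-- Congruence on queues: messages from distinct senders may be exchanged. -/
inductive QCong {P Val : Type} : List (P × Val) → List (P × Val) → Prop where
  | refl : QCong ρ ρ
  | trans : QCong ρ₁ ρ₂ → QCong ρ₂ ρ₃ → QCong ρ₁ ρ₃
  | cons : QCong ρ ρ' → QCong (m :: ρ) (m :: ρ')
  | swap : p ≠ q → QCong ((p, m) :: (q, m') :: ρ) ((q, m') :: (p, m) :: ρ)

/-- Structural precongruence ⪯ on aSP networks. -/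
inductive ANPre {P E Mem Val : Type} : ANet P E Mem Val → ANet P E Mem Val → Prop where
  | refl : ANPre N N
  | trans : ANPre N₁ N₂ → ANPre N₂ N₃ → ANPre N₁ N₃
  | actorCong : BPre B B' → ANPre (.actor p ρ σ B) (.actor p ρ σ B')
  | parCong : ANPre N₁ N₁' → ANPre N₂ N₂' → ANPre (.par N₁ N₂) (.par N₁' N₂')
  | parComm : ANPre (.par N₁ N₂) (.par N₂ N₁)
  | parAssoc : ANPre (.par (.par N₁ N₂) N₃) (.par N₁ (.par N₂ N₃))
  | parAssoc' : ANPre (.par N₁ (.par N₂ N₃)) (.par (.par N₁ N₂) N₃)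
  | pZero : ANPre (.actor p [] σ .nil) .nil
  | nZero : ANPre (.par N .nil) N
  | nZero' : ANPre N (.par N .nil)

/-- Asynchronous semantics of aSP networks. -/
inductive StepAN {P E Mem Val : Type}
    (ev : E → Mem → Val) (tr : Val → Bool) (up : Mem → Val → Mem) :
    ANet P E Mem Val → ANet P E Mem Val → Prop where
  | comS : StepAN ev tr up
      (.par (.actor p ρp σp (.send q e B)) (.actor q ρq σq Bq))
      (.par (.actor p ρp σp B) (.actor q (ρq ++ [(p, ev e σp)]) σq Bq))
  | comR : QCong ρq ((p, v) :: ρq') →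
      StepAN ev tr up (.actor q ρq σq (.recv p B)) (.actor q ρq' (up σq v) B)
  | thenB : tr (ev e σp) = true →
      StepAN ev tr up (.actor p ρ σp (.cond e B₁ B₂)) (.actor p ρ σp B₁)
  | elseB : tr (ev e σp) = false →
      StepAN ev tr up (.actor p ρ σp (.cond e B₁ B₂)) (.actor p ρ σp B₂)
  | ctx : StepAN ev tr up (.par (.actor p ρ σp B) N) (.par (.actor p ρ' σp' B') N') →
      StepAN ev tr up (.par (.actor p ρ σp (.recdef X B₂ B)) N)
                      (.par (.actor p ρ' σp' (.recdef X B₂ B')) N')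
  | par : StepAN ev tr up N N' → StepAN ev tr up (.par N M) (.par N' M)
  | struct : ANPre N₁ N₂ → StepAN ev tr up N₂ N₂' → ANPre N₂' N₁' → StepAN ev tr up N₁ N₁'
/-- The asynchronous network obtained from an SP network by equipping each process
    with an empty queue. -/
def withQueues {P E Mem Val : Type} : Net P E Mem → ANet P E Mem Val
  | .actor p σ B => .actor p [] σ B
  | .par N₁ N₂ => .par (withQueues N₁) (withQueues N₂)
  | .nil => .nil

/-- An aSP network contains an actor named `p`. -/
inductive HasA {P E Mem Val : Type} : P → ANet P E Mem Val → Prop where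
  | here : HasA p (.actor p ρ σ B)
  | left : HasA p N₁ → HasA p (.par N₁ N₂)
  | right : HasA p N₂ → HasA p (.par N₁ N₂)

theorem anpre_of_npre {P E Mem Val : Type} {N M : Net P E Mem} (h : NPre N M) :
    ANPre (withQueues N : ANet P E Mem Val) (withQueues M) := by
  induction h with
  | refl => exact .refl
  | trans _ _ ih₁ ih₂ => exact .trans ih₁ ih₂
  | actorCong hb => exact .actorCong hb
  | parCong _ _ ih₁ ih₂ => exact .parCong ih₁ ih₂
  | parComm => exact .parComm
  | parAssoc => exact .parAssoc
  | parAssoc' => exact .parAssoc'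
  | pZero => exact .pZero
  | nZero => exact .nZero
  | nZero' => exact .nZero'

theorem hasA_mono {P E Mem Val : Type} {X Y : ANet P E Mem Val} (h : ANPre X Y) :
    ∀ r, HasA r Y → HasA r X := by
  induction h with
  | refl => exact fun _ h => h
  | trans _ _ ih₁ ih₂ => exact fun r h => ih₁ r (ih₂ r h)
  | actorCong hb => intro r h; cases h; exact .here
  | parCong _ _ ih₁ ih₂ =>
      intro r h
      cases h with
      | left h => exact .left (ih₁ r h)
      | right h => exact .right (ih₂ r h)
  | parComm =>
      intro r h
      cases h with
      | left h => exact .right h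
      | right h => exact .left h
  | parAssoc =>
      intro r h
      cases h with
      | left h => exact .left (.left h)
      | right h =>
        cases h with
        | left h => exact .left (.right h)
        | right h => exact .right h
  | parAssoc' =>
      intro r h
      cases h with
      | left h =>
        cases h with
        | left h => exact .left h
        | right h => exact .right (.left h)
      | right h => exact .right (.right h)
  | pZero => intro r h; cases h
  | nZero => intro r h; exact .left h
  | nZero' =>
      intro r h
      cases h with
      | left h => exact h
      | right h => cases h

theorem expose {P E Mem Val : Type} {r : P} {A : ANet P E Mem Val} (h : HasA r A) :
    ∃ ρ σ B M, ANPre A (.par (.actor r ρ σ B) M) ∧ ANPre (.par (.actor r ρ σ B) M) A := by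
  induction h with
  | here => exact ⟨_, _, _, .nil, .nZero', .nZero⟩
  | left h ih =>
      obtain ⟨ρ, σ, B, M, f, b⟩ := ih
      exact ⟨ρ, σ, B, .par M _,
        .trans (.parCong f .refl) .parAssoc,
        .trans .parAssoc' (.parCong b .refl)⟩
  | right h ih =>
      rename_i N₂x N₁x
      obtain ⟨ρ, σ, B, M, f, b⟩ := ih
      refine ⟨ρ, σ, B, .par N₁x M, ?_, ?_⟩
      · exact .trans (.parCong .refl f)
          (.trans .parAssoc' (.trans (.parCong .parComm .refl) .parAssoc))
      · exact .trans .parAssoc'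
          (.trans (.parCong .parComm .refl) (.trans .parAssoc (.parCong .refl b)))

theorem sim_main {P E Mem Val : Type}
    (ev : E → Mem → Val) (tr : Val → Bool) (up : Mem → Val → Mem)
    {N N' : Net P E Mem} (h : StepN ev tr up N N') :
    StepAN ev tr up (withQueues N : ANet P E Mem Val) (withQueues N')
    ∨ ∃ A, StepAN ev tr up (withQueues N) A ∧ StepAN ev tr up A (withQueues N')
        ∧ ∀ r, HasA r (withQueues N' : ANet P E Mem Val) → HasA r A := by
  induction h with
  | @com p σp q e B₁ σq B₂ =>
      right
      refine ⟨.par (.actor p [] σp B₁) (.actor q [(p, ev e σp)] σq (.recv p B₂)),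
        StepAN.comS, ?_, ?_⟩
      · exact StepAN.struct .parComm (StepAN.par (.comR .refl)) .parComm
      · intro r hr
        cases hr with
        | left h => cases h; exact .left .here
        | right h => cases h; exact .right .here
  | thenB h => exact .inl (.thenB h)
  | elseB h => exact .inl (.elseB h)
  | ctx hs ih =>
      rename_i p σp B M σp' B' M' X B₂
      rcases ih with s | ⟨A, s₁, s₂, inv⟩
      · exact .inl (StepAN.ctx s)
      · have hp : HasA p A := inv p (.left .here)
        obtain ⟨ρa, σa, Ba, MA, hf, hb⟩ := expose hp
        right
        refine ⟨.par (.actor p ρa σa (.recdef X B₂ Ba)) MA, ?_, ?_, ?_⟩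
        · exact StepAN.ctx (StepAN.struct .refl s₁ hf)
        · exact StepAN.ctx (StepAN.struct hb s₂ .refl)
        · intro r hr
          have hrA : HasA r A := by
            cases hr with
            | left h => cases h; exact inv _ (.left .here)
            | right h => exact inv _ (.right h)
          have h2 := hasA_mono hb r hrA
          cases h2 with
          | left h => cases h; exact .left .here
          | right h => exact .right h
  | par hs ih =>
      rcases ih with s | ⟨A, s₁, s₂, inv⟩
      · exact .inl (StepAN.par s)
      · right
        refine ⟨.par A _, StepAN.par s₁, StepAN.par s₂, ?_⟩
        intro r hr
        cases hr with
        | left h => exact .left (inv r h)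
        | right h => exact .right h
  | struct h₁ hs h₂ ih =>
      rcases ih with s | ⟨A, s₁, s₂, inv⟩
      · exact .inl (.struct (anpre_of_npre h₁) s (anpre_of_npre h₂))
      · right
        refine ⟨A, .struct (anpre_of_npre h₁) s₁ .refl, .struct .refl s₂ (anpre_of_npre h₂), ?_⟩
        intro r hr
        exact inv r (hasA_mono (anpre_of_npre h₂) r hr)

/-- Simulation of SP by aSP (Theorem 4.1): if N → N' in SP, then N_[] →* N'_[] in aSP,
    where N_[] equips each process with an empty queue. -/
theorem sp_simulated_by_asp {P E Mem Val : Type}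
    (ev : E → Mem → Val) (tr : Val → Bool) (up : Mem → Val → Mem)
    (N N' : Net P E Mem)
    (h : StepN ev tr up N N') :
    Relation.ReflTransGen (StepAN ev tr up)
      (withQueues N : ANet P E Mem Val) (withQueues N') := by
  rcases sim_main ev tr up h with s | ⟨A, s₁, s₂, _⟩
  · exact Relation.ReflTransGen.single s
  · exact Relation.ReflTransGen.head s₁ (Relation.ReflTransGen.single s₂)
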